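/- Let u : ℝ → ℂ be a Schwartz function and define its Fourier transform by û(ξ) := (1/(2π))·∫_ℝ u(y)·exp(-i·ξ·y) dy. Then for all x, k ∈ ℝ, Σ_{n∈ℤ} u(x + 2πn)·exp(-i·k·(x + 2πn)) = Σ_{j∈ℤ} û(k + j)·exp(i·j·x), both series converging absolutely. -/

import Mathlib

open Real MeasureTheory FourierTransform Filter Asymptotics


lemma rpow_neg_two_eq (t : ℝ) : t ^ (-2 : ℝ) = (t ^ 2)⁻¹ := by
  rw [show (-2:ℝ) = ((-2:ℤ):ℝ) by norm_num, Real.rpow_intCast]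
  rw [zpow_neg]
  norm_cast

lemma abs_shift_isBigO (a : ℝ) :
    (fun ξ : ℝ => |a + ξ| ^ (-2 : ℝ)) =O[Filter.cocompact ℝ] (fun ξ => |ξ| ^ (-2 : ℝ)) := by
  rw [isBigO_iff]
  refine ⟨4, ?_⟩
  have h : ∀ᶠ ξ : ℝ in Filter.cocompact ℝ, 2 * |a| + 2 ≤ |ξ| := by
    rw [cocompact_eq_atBot_atTop, Filter.eventually_sup]
    constructor
    · filter_upwards [Filter.eventually_le_atBot (-(2 * |a| + 2))] with ξ hξ
      exact le_trans (by linarith [neg_le_abs ξ]) le_rfl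
    · filter_upwards [Filter.eventually_ge_atTop (2 * |a| + 2)] with ξ hξ
      exact le_trans hξ (le_abs_self ξ)
  filter_upwards [h] with ξ hξ
  have ha : 0 ≤ |a| := abs_nonneg a
  have h1 : |ξ| / 2 ≤ |a + ξ| := by
    have h0 := abs_add_le (a + ξ) (-a)
    rw [show a + ξ + -a = ξ by ring, abs_neg] at h0
    linarith
  have hξ0 : (0:ℝ) < |ξ| := by linarith
  have hpos : (0:ℝ) < |ξ| / 2 := by linarith
  have key : |a + ξ| ^ (-2 : ℝ) ≤ (|ξ| / 2) ^ (-2 : ℝ) :=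
    Real.rpow_le_rpow_of_nonpos hpos h1 (by norm_num)
  have h4 : (|ξ| / 2) ^ (-2 : ℝ) = 4 * |ξ| ^ (-2 : ℝ) := by
    rw [rpow_neg_two_eq, rpow_neg_two_eq]
    field_simp
    ring
  rw [Real.norm_eq_abs, Real.norm_eq_abs, abs_of_nonneg (Real.rpow_nonneg (abs_nonneg _) _),
    abs_of_nonneg (Real.rpow_nonneg (abs_nonneg _) _)]
  calc |a + ξ| ^ (-2:ℝ) ≤ (|ξ|/2) ^ (-2:ℝ) := key
    _ = 4 * |ξ| ^ (-2:ℝ) := h4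

lemma schwartz_summable_shift (v : SchwartzMap ℝ ℂ) (a : ℝ) :
    Summable (fun n : ℤ => ‖v (a + n)‖) := by
  have h0 : Tendsto (fun ξ : ℝ => a + ξ) (cocompact ℝ) (cocompact ℝ) :=
    (Homeomorph.addLeft a).map_cocompact.le
  have h1 : Tendsto (fun n : ℤ => a + (n : ℝ)) cofinite (cocompact ℝ) :=
    h0.comp Int.tendsto_coe_cofinite
  have h2 := (v.isBigO_cocompact_rpow (-2)).comp_tendsto h1
  have h3 := (abs_shift_isBigO a).comp_tendsto Int.tendsto_coe_cofinite
  exact (summable_of_isBigO (Real.summable_abs_int_rpow one_lt_two)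
    (h2.norm_left.trans h3)).congr (fun n => rfl)

section test
variable (u : SchwartzMap ℝ ℂ) (uhat : ℝ → ℂ)
  (huhat : ∀ ξ : ℝ, uhat ξ
    = (1 / (2 * π) : ℂ) * ∫ y : ℝ, u y * Complex.exp (-(Complex.I * (ξ : ℂ) * (y : ℂ))))
  (x k : ℝ)

noncomputable def Esc : ℝ ≃L[ℝ] ℝ :=
  (LinearEquiv.smulOfNeZero ℝ ℝ (2*π) (by positivity)).toContinuousLinearEquiv

noncomputable def gS (u : SchwartzMap ℝ ℂ) : SchwartzMap ℝ ℂ :=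
  SchwartzMap.compCLMOfContinuousLinearEquiv ℝ Esc u

lemma gS_apply (u : SchwartzMap ℝ ℂ) (v : ℝ) : gS u v = u (2*π*v) := rfl

noncomputable def wS (u : SchwartzMap ℝ ℂ) : SchwartzMap ℝ ℂ :=
  SchwartzMap.fourierTransformCLM ℝ (gS u)

include huhat in
lemma w_eq : ∀ ξ : ℝ, wS u ξ = uhat ξ := by
  intro ξ
  have h1 : wS u ξ = 𝓕 (⇑(gS u)) ξ := rfl
  rw [h1, Real.fourier_real_eq_integral_exp_smul]
  have h2 : ∀ v : ℝ, Complex.exp (↑(-2 * π * v * ξ) * Complex.I) • gS u v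
      = (fun y : ℝ => u y * Complex.exp (-(Complex.I * (ξ : ℂ) * (y : ℂ)))) (2 * π * v) := by
    intro v
    simp only [gS_apply, smul_eq_mul]
    rw [mul_comm]
    congr 1
    · push_cast; ring_nf
  calc (∫ v : ℝ, Complex.exp (↑(-2 * π * v * ξ) * Complex.I) • gS u v)
      = ∫ v : ℝ, (fun y : ℝ => u y * Complex.exp (-(Complex.I * (ξ : ℂ) * (y : ℂ)))) (2 * π * v) := by
        exact integral_congr_ae (Filter.Eventually.of_forall h2)
    _ = |(2*π)⁻¹| • ∫ y : ℝ, u y * Complex.exp (-(Complex.I * (ξ : ℂ) * (y : ℂ))) :=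
        MeasureTheory.Measure.integral_comp_mul_left (fun y : ℝ => u y * Complex.exp (-(Complex.I * (ξ : ℂ) * (y : ℂ)))) (2*π)
    _ = uhat ξ := by
        rw [huhat ξ, abs_of_pos (by positivity)]
        rw [Complex.real_smul]
        push_cast
        ring_nf

end test

section part2
variable (u : SchwartzMap ℝ ℂ) (k : ℝ)

noncomputable def fb : ℝ → ℂ :=
  fun v => Complex.exp (-(Complex.I * k * (2*π*v))) * u (2*π*v)

lemma fb_norm (v : ℝ) : ‖fb u k v‖ = ‖u (2*π*v)‖ := by
  rw [fb, norm_mul, Complex.norm_exp]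
  simp

lemma fb_cont : Continuous (fb u k) := by
  unfold fb; fun_prop

lemma mulLeft_cocompact : Tendsto (fun v : ℝ => 2*π*v) (cocompact ℝ) (cocompact ℝ) :=
  (Homeomorph.mulLeft₀ (2*π) (by positivity)).map_cocompact.le

lemma fb_decay : fb u k =O[cocompact ℝ] fun v : ℝ => |v| ^ (-2:ℝ) := by
  have h1 : (fun v : ℝ => u (2*π*v)) =O[cocompact ℝ] fun v : ℝ => |2*π*v| ^ (-2:ℝ) :=
    (u.isBigO_cocompact_rpow (-2)).comp_tendsto mulLeft_cocompact
  have h2 : fb u k =O[cocompact ℝ] fun v : ℝ => u (2*π*v) :=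
    isBigO_of_le _ (fun v => le_of_eq (fb_norm u k v))
  have h3 : (fun v : ℝ => |2*π*v| ^ (-2:ℝ)) =O[cocompact ℝ] fun v : ℝ => |v| ^ (-2:ℝ) := by
    have heq : ∀ v : ℝ, |2*π*v| ^ (-2:ℝ) = (2*π) ^ (-2:ℝ) * |v| ^ (-2:ℝ) := by
      intro v
      rw [abs_mul, abs_of_pos (by positivity : (0:ℝ) < 2*π),
        Real.mul_rpow (by positivity) (abs_nonneg v)]
    exact (funext heq : _) ▸ (isBigO_refl (fun v : ℝ => |v| ^ (-2:ℝ)) _).const_mul_left _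
  exact (h2.trans h1).trans h3

lemma fb_fourier (ξ : ℝ) : 𝓕 (fb u k) ξ = wS u (k + ξ) := by
  have h1 : wS u (k + ξ) = 𝓕 (⇑(gS u)) (k + ξ) := rfl
  rw [h1, Real.fourier_real_eq_integral_exp_smul,
    Real.fourier_real_eq_integral_exp_smul]
  refine integral_congr_ae (Filter.Eventually.of_forall fun v => ?_)
  simp only [fb, gS_apply, smul_eq_mul, ← mul_assoc, ← Complex.exp_add]
  congr 1
  push_cast
  ring

lemma fb_fourier_decay : 𝓕 (fb u k) =O[cocompact ℝ] fun v : ℝ => |v| ^ (-2:ℝ) := by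
  have h0 : Tendsto (fun ξ : ℝ => k + ξ) (cocompact ℝ) (cocompact ℝ) :=
    (Homeomorph.addLeft k).map_cocompact.le
  have h1 : (fun ξ : ℝ => wS u (k + ξ)) =O[cocompact ℝ] fun ξ : ℝ => |k + ξ| ^ (-2:ℝ) :=
    ((wS u).isBigO_cocompact_rpow (-2)).comp_tendsto h0
  have h2 := h1.trans (abs_shift_isBigO k)
  exact (funext (fb_fourier u k) : 𝓕 (fb u k) = _) ▸ h2

end part2

/-- For a Schwartz function `u` with Fourier transform
`û(ξ) = (1/2π)∫ u(y)e^{-iξy} dy`, the Bloch-transform identity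
`Σ_{n∈ℤ} u(x+2πn) e^{-ik(x+2πn)} = Σ_{j∈ℤ} û(k+j) e^{ijx}` holds for all `x, k ∈ ℝ`,
both series converging absolutely. -/
theorem bloch_transform_poisson_identity
    (u : SchwartzMap ℝ ℂ) (uhat : ℝ → ℂ)
    (huhat : ∀ ξ : ℝ, uhat ξ
      = (1 / (2 * π) : ℂ) * ∫ y : ℝ, u y * Complex.exp (-(Complex.I * (ξ : ℂ) * (y : ℂ))))
    (x k : ℝ) :
    Summable (fun n : ℤ =>
      ‖u (x + 2 * π * n) * Complex.exp (-(Complex.I * (k : ℂ) * ((x + 2 * π * n : ℝ) : ℂ)))‖) ∧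
    Summable (fun j : ℤ =>
      ‖uhat (k + j) * Complex.exp (Complex.I * (j : ℂ) * (x : ℂ))‖) ∧
    (∑' n : ℤ, u (x + 2 * π * n)
        * Complex.exp (-(Complex.I * (k : ℂ) * ((x + 2 * π * n : ℝ) : ℂ))))
      = ∑' j : ℤ, uhat (k + j) * Complex.exp (Complex.I * (j : ℂ) * (x : ℂ)) := by
  have hπ : (0:ℝ) < 2 * π := by positivity
  have harg : ∀ n : ℤ, 2 * π * (x / (2 * π) + n) = x + 2 * π * n := by
    intro n; field_simp
  have hexp1 : ∀ z : ℂ, z.re = 0 → ‖Complex.exp z‖ = 1 := by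
    intro z hz
    rw [Complex.norm_exp, hz, Real.exp_zero]
  refine ⟨?_, ?_, ?_⟩
  · refine (schwartz_summable_shift (gS u) (x / (2 * π))).congr fun n => ?_
    rw [norm_mul, gS_apply, harg n,
      hexp1 _ (by simp), mul_one]
  · refine (schwartz_summable_shift (wS u) k).congr fun j => ?_
    rw [norm_mul, hexp1 _ (by simp), mul_one, w_eq u uhat huhat]
  · have P := Real.tsum_eq_tsum_fourier_of_rpow_decay (fb_cont u k) one_lt_two
      (fb_decay u k) (fb_fourier_decay u k) (x / (2 * π))
    have hL : ∀ n : ℤ, fb u k (x / (2 * π) + n)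
        = u (x + 2 * π * n) * Complex.exp (-(Complex.I * (k : ℂ) * ((x + 2 * π * n : ℝ) : ℂ))) := by
      intro n
      rw [fb, harg n, mul_comm]
      have hπC : ((π : ℂ)) ≠ 0 := Complex.ofReal_ne_zero.mpr Real.pi_ne_zero
      have hx : 2*(π:ℂ)*((x:ℂ)/(2*(π:ℂ))+(n:ℂ)) = (x:ℂ)+2*(π:ℂ)*(n:ℂ) := by
        field_simp
      congr 2
      push_cast
      linear_combination (-(Complex.I * (k:ℂ))) * hx
    have hR : ∀ m : ℤ, 𝓕 (fb u k) m * fourier m ((x / (2 * π) : ℝ) : UnitAddCircle)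
        = uhat (k + m) * Complex.exp (Complex.I * (m : ℂ) * (x : ℂ)) := by
      intro m
      rw [fb_fourier, w_eq u uhat huhat, fourier_coe_apply]
      have hπC : ((π : ℂ)) ≠ 0 := Complex.ofReal_ne_zero.mpr Real.pi_ne_zero
      have hx : 2*(π:ℂ)*((x:ℂ)/(2*(π:ℂ))) = (x:ℂ) := by
        field_simp
      congr 2
      push_cast
      linear_combination (Complex.I * (m:ℂ)) * hx
    calc (∑' n : ℤ, u (x + 2 * π * n)
          * Complex.exp (-(Complex.I * (k : ℂ) * ((x + 2 * π * n : ℝ) : ℂ))))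
        = ∑' n : ℤ, fb u k (x / (2 * π) + n) := by
          exact tsum_congr fun n => (hL n).symm
      _ = ∑' m : ℤ, 𝓕 (fb u k) m * fourier m ((x / (2 * π) : ℝ) : UnitAddCircle) := P
      _ = ∑' j : ℤ, uhat (k + j) * Complex.exp (Complex.I * (j : ℂ) * (x : ℂ)) :=
          tsum_congr hR
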